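/- (mth-order Markov property of the outcome marginal.) Under the mth-order Markov model, the marginal law of the outcomes factorizes through the local factors: for every y ∈ {0,1}^K, P(Y₁ = y₁, …, Y_K = y_K) = Σ_{r ∈ {0,1}^K} p(y,r) = ∏_{k=1}^K aₖ(yₖ | ȳᵐₖ); consequently, for every k, f(Yₖ = yₖ | Y₁ = y₁, …, Y_{k−1} = y_{k−1}) = f(Yₖ = yₖ | Y_{max(1,k−m)} = y_{max(1,k−m)}, …, Y_{k−1} = y_{k−1}) = aₖ(yₖ | ȳᵐₖ). -/

import Mathlib

open scoped Classical BigOperators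

namespace MRM

/-- Observed datum at index `j`: `some (y j)` if `r j = true` (observed), otherwise `none`
(missing, i.e. the value `?`). -/
def obs {K : ℕ} (y r : Fin K → Bool) (j : Fin K) : Option Bool :=
  if r j then some (y j) else none

/-- Probability of an event under the joint pmf `p` on outcomes and response indicators. -/
noncomputable def Pr {K : ℕ} (p : (Fin K → Bool) → (Fin K → Bool) → ℝ)
    (E : (Fin K → Bool) → (Fin K → Bool) → Prop) : ℝ :=
  ∑ y : Fin K → Bool, ∑ r : Fin K → Bool, if E y r then p y r else 0

/-- Conditional probability `P(A | C)` under `p`. -/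
noncomputable def cPr {K : ℕ} (p : (Fin K → Bool) → (Fin K → Bool) → ℝ)
    (A C : (Fin K → Bool) → (Fin K → Bool) → Prop) : ℝ :=
  Pr p (fun y r => A y r ∧ C y r) / Pr p C

/-- Event: the outcomes at the 1-based positions `lo ≤ pos ≤ hi` take the values `yv pos`.
(If `hi < lo`, or the window is out of range, this is the trivial event, matching the
convention that a vector whose lower index exceeds its upper index is the null vector.) -/
def Yeq {K : ℕ} (lo hi : ℕ) (yv : ℕ → Bool) :
    (Fin K → Bool) → (Fin K → Bool) → Prop :=
  fun y _ => ∀ j : Fin K, lo ≤ j.1 + 1 → j.1 + 1 ≤ hi → y j = yv (j.1 + 1)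

/-- Event: the response indicators at positions `lo ≤ pos ≤ hi` take the values `rv pos`. -/
def Req {K : ℕ} (lo hi : ℕ) (rv : ℕ → Bool) :
    (Fin K → Bool) → (Fin K → Bool) → Prop :=
  fun _ r => ∀ j : Fin K, lo ≤ j.1 + 1 → j.1 + 1 ≤ hi → r j = rv (j.1 + 1)

/-- Event: the observed data at positions `lo ≤ pos ≤ hi` take the values `ov pos`. -/
def Oeq {K : ℕ} (lo hi : ℕ) (ov : ℕ → Option Bool) :
    (Fin K → Bool) → (Fin K → Bool) → Prop :=
  fun y r => ∀ j : Fin K, lo ≤ j.1 + 1 → j.1 + 1 ≤ hi → obs y r j = ov (j.1 + 1)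

/-- The `m`-th order Markov model:
`p(y, r) = ∏ₖ aₖ(yₖ | ȳᵐₖ) · bₖ(rₖ | ȳᵐₖ, yₖ, o̲ᵐₖ)`, where `aₖ` and `bₖ` are strictly
positive conditional pmfs in their first argument, `aₖ` depends only on the outcomes at
1-based positions `max(1, k − m), …, k`, and `bₖ` depends only on `rₖ`, the outcomes at
positions `max(1, k − m), …, k` and the observed data at positions `k + 1, …, min(k + m, K)`.
Indices of `Fin K` are 0-based, so the 1-based paper position of `k : Fin K` is `k.1 + 1`. -/
structure Markov (K m : ℕ) where
  p : (Fin K → Bool) → (Fin K → Bool) → ℝ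
  a : Fin K → (Fin K → Bool) → ℝ
  b : Fin K → (Fin K → Bool) → (Fin K → Bool) → ℝ
  a_pos : ∀ k y, 0 < a k y
  b_pos : ∀ k y r, 0 < b k y r
  a_pmf : ∀ (k : Fin K) (y : Fin K → Bool), ∑ v : Bool, a k (Function.update y k v) = 1
  b_pmf : ∀ (k : Fin K) (y r : Fin K → Bool), ∑ v : Bool, b k y (Function.update r k v) = 1
  a_local : ∀ (k : Fin K) (y y' : Fin K → Bool),
    (∀ j : Fin K, k.1 + 1 - m ≤ j.1 + 1 → j.1 ≤ k.1 → y j = y' j) → a k y = a k y'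
  b_local : ∀ (k : Fin K) (y r y' r' : Fin K → Bool), r k = r' k →
    (∀ j : Fin K, k.1 + 1 - m ≤ j.1 + 1 → j.1 ≤ k.1 → y j = y' j) →
    (∀ j : Fin K, k.1 < j.1 → j.1 + 1 ≤ k.1 + 1 + m → obs y r j = obs y' r' j) →
    b k y r = b k y' r'
  factor : ∀ y r, p y r = ∏ k : Fin K, a k y * b k y r
  sum_one : ∑ y : Fin K → Bool, ∑ r : Fin K → Bool, p y r = 1

/-- Real value of a binary outcome. -/
def yVal (v : Bool) : ℝ := if v then 1 else 0

/-- `cₖ(ȳᵐₖ, o̲ᵐₖ; α) = E[exp(α Yₖ) | Rₖ = 1, Ȳᵐₖ = ȳᵐₖ, O̲ᵐₖ = o̲ᵐₖ]` (`k` is 1-based). -/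
noncomputable def cfun {K : ℕ} (p : (Fin K → Bool) → (Fin K → Bool) → ℝ) (m : ℕ) (α : ℝ)
    (k : ℕ) (yv : ℕ → Bool) (ov : ℕ → Option Bool) : ℝ :=
  ∑ v : Bool, Real.exp (α * yVal v) *
    cPr p (Yeq k k (fun _ => v))
      (fun y r => Req k k (fun _ => true) y r ∧ Yeq (k - m) (k - 1) yv y r ∧
        Oeq (k + 1) (k + m) ov y r)

/-- The exponential tilting restriction with sensitivity parameters `α k` (`k` is 1-based):
`f(Yₖ | Rₖ = 0, Ȳᵐₖ, O̲ᵐₖ) = f(Yₖ | Rₖ = 1, Ȳᵐₖ, O̲ᵐₖ) · exp(αₖ Yₖ) / cₖ(Ȳᵐₖ, O̲ᵐₖ; αₖ)`. -/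
def Tilt {K : ℕ} (p : (Fin K → Bool) → (Fin K → Bool) → ℝ) (m : ℕ) (α : ℕ → ℝ) : Prop :=
  ∀ (k : ℕ), 1 ≤ k → k ≤ K → ∀ (yv : ℕ → Bool) (ov : ℕ → Option Bool),
    cPr p (Yeq k k yv)
      (fun y r => Req k k (fun _ => false) y r ∧ Yeq (k - m) (k - 1) yv y r ∧
        Oeq (k + 1) (k + m) ov y r)
    = cPr p (Yeq k k yv)
        (fun y r => Req k k (fun _ => true) y r ∧ Yeq (k - m) (k - 1) yv y r ∧
          Oeq (k + 1) (k + m) ov y r)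
      * Real.exp (α k * yVal (yv k)) / cfun p m (α k) k yv ov


open Finset in
lemma tail_sum {K : ℕ} (g : Fin K → (Fin K → Bool) → ℝ)
    (hloc : ∀ (k : Fin K) (r r' : Fin K → Bool),
      (∀ j : Fin K, k.1 ≤ j.1 → r j = r' j) → g k r = g k r')
    (hpmf : ∀ (k : Fin K) (r : Fin K → Bool), ∑ v : Bool, g k (Function.update r k v) = 1) :
    ∀ n : ℕ, n ≤ K → ∀ r₀ : Fin K → Bool,
      ∑ r ∈ Finset.univ.filter (fun r : Fin K → Bool => ∀ j : Fin K, n ≤ j.1 → r j = r₀ j),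
        ∏ k ∈ Finset.univ.filter (fun k : Fin K => k.1 < n), g k r = 1 := by
  intro n
  induction n with
  | zero =>
    intro _ r₀
    have hset : (Finset.univ.filter (fun r : Fin K → Bool => ∀ j : Fin K, 0 ≤ j.1 → r j = r₀ j))
        = {r₀} := by
      ext r
      simp only [mem_filter, mem_univ, true_and, mem_singleton]
      constructor
      · intro h; funext j; exact h j (Nat.zero_le _)
      · intro h j _; rw [h]
    have hprod : (Finset.univ.filter (fun k : Fin K => k.1 < 0)) = ∅ := by
      ext k; simp
    rw [hset, hprod]
    simp
  | succ n ih =>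
    intro hn r₀
    have hnK : n < K := hn
    set kn : Fin K := ⟨n, hnK⟩ with hkn
    rw [← Finset.sum_fiberwise _ (fun r : Fin K → Bool => r kn)]
    have hfib : ∀ v : Bool,
        (Finset.univ.filter (fun r : Fin K → Bool => ∀ j : Fin K, n + 1 ≤ j.1 → r j = r₀ j)).filter
          (fun r => r kn = v)
        = Finset.univ.filter
            (fun r : Fin K → Bool => ∀ j : Fin K, n ≤ j.1 → r j = Function.update r₀ kn v j) := by
      intro v
      ext r
      simp only [mem_filter, mem_univ, true_and]
      constructor
      · rintro ⟨h1, h2⟩ j hj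
        by_cases hjk : j = kn
        · subst hjk; rw [Function.update_self]; exact h2
        · rw [Function.update_of_ne hjk]
          refine h1 j ?_
          have : j.1 ≠ n := fun h => hjk (Fin.ext h)
          omega
      · intro h
        constructor
        · intro j hj
          have hjk : j ≠ kn := by
            intro he; subst he; simp [hkn] at hj
          have := h j (by omega)
          rwa [Function.update_of_ne hjk] at this
        · have := h kn (le_refl _)
          rwa [Function.update_self] at this
    have hins : (Finset.univ.filter (fun k : Fin K => k.1 < n + 1))
        = insert kn (Finset.univ.filter (fun k : Fin K => k.1 < n)) := by
      ext k
      simp only [mem_filter, mem_univ, true_and, mem_insert]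
      constructor
      · intro h
        by_cases hk : k = kn
        · left; exact hk
        · right
          have : k.1 ≠ n := fun h' => hk (Fin.ext h')
          omega
      · rintro (h | h)
        · subst h; simp [hkn]
        · omega
    have hkn_not : kn ∉ Finset.univ.filter (fun k : Fin K => k.1 < n) := by simp [hkn]
    calc ∑ v : Bool, ∑ r ∈ (Finset.univ.filter
            (fun r : Fin K → Bool => ∀ j : Fin K, n + 1 ≤ j.1 → r j = r₀ j)).filter
            (fun r => r kn = v),
          ∏ k ∈ Finset.univ.filter (fun k : Fin K => k.1 < n + 1), g k r
        = ∑ v : Bool, g kn (Function.update r₀ kn v) := by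
          refine Finset.sum_congr rfl fun v _ => ?_
          rw [hfib v]
          have : ∀ r ∈ Finset.univ.filter
              (fun r : Fin K → Bool => ∀ j : Fin K, n ≤ j.1 → r j = Function.update r₀ kn v j),
              ∏ k ∈ Finset.univ.filter (fun k : Fin K => k.1 < n + 1), g k r
              = g kn (Function.update r₀ kn v) *
                ∏ k ∈ Finset.univ.filter (fun k : Fin K => k.1 < n), g k r := by
            intro r hr
            simp only [mem_filter, mem_univ, true_and] at hr
            rw [hins, Finset.prod_insert hkn_not]
            congr 1
            exact hloc kn r _ (fun j hj => hr j hj)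
          rw [Finset.sum_congr rfl this, ← Finset.mul_sum, ih (by omega) (Function.update r₀ kn v),
            mul_one]
      _ = 1 := hpmf kn r₀

open Finset in
lemma head_base {K : ℕ} (g : Fin K → (Fin K → Bool) → ℝ) (y₀ : Fin K → Bool) :
    ∑ y ∈ Finset.univ.filter (fun y : Fin K → Bool => ∀ j : Fin K, j.1 < K → y j = y₀ j),
      ∏ k ∈ Finset.univ.filter (fun k : Fin K => K ≤ k.1), g k y = 1 := by
  have hset : (Finset.univ.filter (fun y : Fin K → Bool => ∀ j : Fin K, j.1 < K → y j = y₀ j))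
      = {y₀} := by
    ext y
    simp only [mem_filter, mem_univ, true_and, mem_singleton]
    constructor
    · intro h; funext j; exact h j j.2
    · intro h j _; rw [h]
  have hprod : (Finset.univ.filter (fun k : Fin K => K ≤ k.1)) = ∅ := by
    ext k; simp [Nat.not_le.mpr k.2]
  rw [hset, hprod]
  simp

open Finset in
lemma head_sum {K : ℕ} (g : Fin K → (Fin K → Bool) → ℝ)
    (hloc : ∀ (k : Fin K) (y y' : Fin K → Bool),
      (∀ j : Fin K, j.1 ≤ k.1 → y j = y' j) → g k y = g k y')
    (hpmf : ∀ (k : Fin K) (y : Fin K → Bool), ∑ v : Bool, g k (Function.update y k v) = 1) :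
    ∀ (d n : ℕ), n ≤ K → K - n ≤ d → ∀ y₀ : Fin K → Bool,
      ∑ y ∈ Finset.univ.filter (fun y : Fin K → Bool => ∀ j : Fin K, j.1 < n → y j = y₀ j),
        ∏ k ∈ Finset.univ.filter (fun k : Fin K => n ≤ k.1), g k y = 1 := by
  intro d
  induction d with
  | zero =>
    intro n hn hd y₀
    have : n = K := by omega
    subst this
    exact head_base g y₀
  | succ d ih =>
    intro n hn hd y₀
    by_cases hnK : n = K
    · subst hnK; exact head_base g y₀
    have hnK' : n < K := by omega
    set kn : Fin K := ⟨n, hnK'⟩ with hkn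
    rw [← Finset.sum_fiberwise _ (fun y : Fin K → Bool => y kn)]
    have hfib : ∀ v : Bool,
        (Finset.univ.filter (fun y : Fin K → Bool => ∀ j : Fin K, j.1 < n → y j = y₀ j)).filter
          (fun y => y kn = v)
        = Finset.univ.filter
            (fun y : Fin K → Bool => ∀ j : Fin K, j.1 < n + 1 → y j = Function.update y₀ kn v j) := by
      intro v
      ext y
      simp only [mem_filter, mem_univ, true_and]
      constructor
      · rintro ⟨h1, h2⟩ j hj
        by_cases hjk : j = kn
        · subst hjk; rw [Function.update_self]; exact h2
        · rw [Function.update_of_ne hjk]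
          refine h1 j ?_
          have : j.1 ≠ n := fun h => hjk (Fin.ext h)
          omega
      · intro h
        constructor
        · intro j hj
          have hjk : j ≠ kn := by
            intro he; subst he; simp [hkn] at hj
          have := h j (by omega)
          rwa [Function.update_of_ne hjk] at this
        · have := h kn (by simp [hkn])
          rwa [Function.update_self] at this
    have hins : (Finset.univ.filter (fun k : Fin K => n ≤ k.1))
        = insert kn (Finset.univ.filter (fun k : Fin K => n + 1 ≤ k.1)) := by
      ext k
      simp only [mem_filter, mem_univ, true_and, mem_insert]
      constructor
      · intro h
        by_cases hk : k = kn
        · left; exact hk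
        · right
          have : k.1 ≠ n := fun h' => hk (Fin.ext h')
          omega
      · rintro (h | h)
        · subst h; simp [hkn]
        · omega
    have hkn_not : kn ∉ Finset.univ.filter (fun k : Fin K => n + 1 ≤ k.1) := by simp [hkn]
    calc ∑ v : Bool, ∑ y ∈ (Finset.univ.filter
            (fun y : Fin K → Bool => ∀ j : Fin K, j.1 < n → y j = y₀ j)).filter
            (fun y => y kn = v),
          ∏ k ∈ Finset.univ.filter (fun k : Fin K => n ≤ k.1), g k y
        = ∑ v : Bool, g kn (Function.update y₀ kn v) := by
          refine Finset.sum_congr rfl fun v _ => ?_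
          rw [hfib v]
          have : ∀ y ∈ Finset.univ.filter
              (fun y : Fin K → Bool => ∀ j : Fin K, j.1 < n + 1 → y j = Function.update y₀ kn v j),
              ∏ k ∈ Finset.univ.filter (fun k : Fin K => n ≤ k.1), g k y
              = g kn (Function.update y₀ kn v) *
                ∏ k ∈ Finset.univ.filter (fun k : Fin K => n + 1 ≤ k.1), g k y := by
            intro y hy
            simp only [mem_filter, mem_univ, true_and] at hy
            rw [hins, Finset.prod_insert hkn_not]
            congr 1
            refine hloc kn y _ (fun j hj => hy j ?_)
            simp only [hkn] at hj
            omega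
          rw [Finset.sum_congr rfl this, ← Finset.mul_sum,
            ih (n + 1) (by omega) (by omega) (Function.update y₀ kn v), mul_one]
      _ = 1 := hpmf kn y₀

open Finset in
lemma sum_r {K m : ℕ} (M : Markov K m) (y : Fin K → Bool) :
    ∑ r : Fin K → Bool, M.p y r = ∏ k : Fin K, M.a k y := by
  have hloc : ∀ (k : Fin K) (r r' : Fin K → Bool),
      (∀ j : Fin K, k.1 ≤ j.1 → r j = r' j) → M.b k y r = M.b k y r' := by
    intro k r r' h
    refine M.b_local k y r y r' (h k (le_refl _)) (fun j _ _ => rfl) (fun j hj _ => ?_)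
    unfold obs
    rw [h j (le_of_lt hj)]
  have key := tail_sum (fun k r => M.b k y r) hloc (fun k r => M.b_pmf k y r) K (le_refl K) (fun _ => false)
  have hful : (Finset.univ.filter (fun r : Fin K → Bool => ∀ j : Fin K, K ≤ j.1 → r j = false))
      = Finset.univ := by
    ext r; simp only [mem_filter, mem_univ, true_and, iff_true]
    intro j hj; exact absurd j.2 (by omega)
  have hful2 : (Finset.univ.filter (fun k : Fin K => k.1 < K)) = Finset.univ := by
    ext k; simp [k.2]
  rw [hful, hful2] at key
  calc ∑ r : Fin K → Bool, M.p y r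
      = ∑ r : Fin K → Bool, (∏ k : Fin K, M.a k y) * ∏ k : Fin K, M.b k y r := by
        refine Finset.sum_congr rfl fun r _ => ?_
        rw [M.factor, Finset.prod_mul_distrib]
    _ = (∏ k : Fin K, M.a k y) * ∑ r : Fin K → Bool, ∏ k : Fin K, M.b k y r := by
        rw [Finset.mul_sum]
    _ = ∏ k : Fin K, M.a k y := by rw [key, mul_one]

open Finset in
lemma Pr_y {K m : ℕ} (M : Markov K m) (E : (Fin K → Bool) → Prop) [DecidablePred E] :
    Pr M.p (fun y _ => E y) = ∑ y ∈ Finset.univ.filter E, ∏ k : Fin K, M.a k y := by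
  unfold Pr
  rw [Finset.sum_filter]
  refine Finset.sum_congr rfl fun y _ => ?_
  by_cases h : E y
  · simp only [h, if_true]
    exact sum_r M y
  · simp [h]

open Finset in
lemma marg {K m : ℕ} (M : Markov K m) (n : ℕ) (hn : n ≤ K) (E : (Fin K → Bool) → Prop)
    [DecidablePred E]
    [DecidablePred (fun y : Fin K → Bool => E y ∧ ∀ j : Fin K, n ≤ j.1 → y j = false)]
    (hE : ∀ y y' : Fin K → Bool, (∀ j : Fin K, j.1 < n → y j = y' j) → E y → E y') :
    ∑ y ∈ Finset.univ.filter E, ∏ k : Fin K, M.a k y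
      = ∑ y ∈ Finset.univ.filter
            (fun y : Fin K → Bool => E y ∧ ∀ j : Fin K, n ≤ j.1 → y j = false),
          ∏ k ∈ Finset.univ.filter (fun k : Fin K => k.1 < n), M.a k y := by
  have haloc : ∀ (k : Fin K) (y y' : Fin K → Bool),
      (∀ j : Fin K, j.1 ≤ k.1 → y j = y' j) → M.a k y = M.a k y' := by
    intro k y y' h
    exact M.a_local k y y' (fun j _ hj => h j hj)
  rw [← Finset.sum_fiberwise (Finset.univ.filter E)
    (fun y : Fin K → Bool => (fun j : Fin K => if j.1 < n then y j else false))]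
  rw [Finset.sum_filter]
  refine Finset.sum_congr rfl fun w _ => ?_
  by_cases hw : E w ∧ ∀ j : Fin K, n ≤ j.1 → w j = false
  · -- the fiber over w is the set of y agreeing with w below n
    have hfib : (Finset.univ.filter E).filter
          (fun y : Fin K → Bool => (fun j : Fin K => if j.1 < n then y j else false) = w)
        = Finset.univ.filter (fun y : Fin K → Bool => ∀ j : Fin K, j.1 < n → y j = w j) := by
      ext y
      simp only [mem_filter, mem_univ, true_and]
      constructor
      · rintro ⟨h1, h2⟩ j hj
        rw [← congrFun h2 j, if_pos hj]
      · intro h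
        constructor
        · exact hE w y (fun j hj => (h j hj).symm) hw.1
        · funext j
          by_cases hj : j.1 < n
          · rw [if_pos hj]; exact h j hj
          · rw [if_neg hj, (hw.2 j (by omega)).symm]
      
    rw [hfib, if_pos hw]
    have hsplit : ∀ y : Fin K → Bool, (∏ k : Fin K, M.a k y)
        = (∏ k ∈ Finset.univ.filter (fun k : Fin K => k.1 < n), M.a k y) *
          ∏ k ∈ Finset.univ.filter (fun k : Fin K => ¬ k.1 < n), M.a k y := by
      intro y
      exact (Finset.prod_filter_mul_prod_filter_not Finset.univ _ _).symm
    have hcongr : ∀ y ∈ Finset.univ.filter (fun y : Fin K → Bool => ∀ j : Fin K, j.1 < n → y j = w j),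
        (∏ k : Fin K, M.a k y)
        = (∏ k ∈ Finset.univ.filter (fun k : Fin K => k.1 < n), M.a k w) *
          ∏ k ∈ Finset.univ.filter (fun k : Fin K => ¬ k.1 < n), M.a k y := by
      intro y hy
      simp only [mem_filter, mem_univ, true_and] at hy
      rw [hsplit y]
      congr 1
      refine Finset.prod_congr rfl fun k hk => ?_
      simp only [mem_filter, mem_univ, true_and] at hk
      exact haloc k y w (fun j hj => hy j (by omega))
    rw [Finset.sum_congr rfl hcongr, ← Finset.mul_sum]
    have hnotset : (Finset.univ.filter (fun k : Fin K => ¬ k.1 < n))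
        = Finset.univ.filter (fun k : Fin K => n ≤ k.1) := by
      ext k; simp only [mem_filter, mem_univ, true_and]; omega
    have := head_sum (fun k y => M.a k y) haloc (fun k y => M.a_pmf k y) (K - n) n hn (le_refl _) w
    rw [hnotset]
    rw [this, mul_one]
  · -- empty fiber
    rw [if_neg hw]
    have hfib : (Finset.univ.filter E).filter
          (fun y : Fin K → Bool => (fun j : Fin K => if j.1 < n then y j else false) = w)
        = ∅ := by
      ext y
      simp only [mem_filter, mem_univ, true_and, Finset.notMem_empty, iff_false, not_and]
      intro h1 h2
      apply hw
      constructor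
      · refine hE y w (fun j hj => ?_) h1
        rw [← congrFun h2 j, if_pos hj]
      · intro j hj
        rw [← congrFun h2 j, if_neg (by omega)]
    rw [hfib, Finset.sum_empty]

open Finset in
lemma Pr_congr {K : ℕ} (p : (Fin K → Bool) → (Fin K → Bool) → ℝ)
    (E E' : (Fin K → Bool) → (Fin K → Bool) → Prop) (h : ∀ y r, E y r ↔ E' y r) :
    Pr p E = Pr p E' := by
  unfold Pr
  exact Finset.sum_congr rfl fun y _ => Finset.sum_congr rfl fun r _ => by
    rw [if_congr (h y r) rfl rfl]

open Finset in
lemma cond_eq {K m : ℕ} (M : Markov K m) (yv : ℕ → Bool) (k : Fin K) (lo : ℕ)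
    (hlo : ∀ jn : ℕ, k.1 + 1 - m ≤ jn + 1 → lo ≤ jn + 1) :
    cPr M.p (Yeq (k.1 + 1) (k.1 + 1) yv) (Yeq lo k.1 yv)
      = M.a k (fun j => yv (j.1 + 1)) := by
  classical
  set yhat : Fin K → Bool := fun j => yv (j.1 + 1) with hyhat
  set C' : (Fin K → Bool) → Prop :=
    fun y => ∀ j : Fin K, lo ≤ j.1 + 1 → j.1 + 1 ≤ k.1 → y j = yv (j.1 + 1) with hC'
  set N' : (Fin K → Bool) → Prop :=
    fun y => y k = yv (k.1 + 1) ∧ C' y with hN'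
  -- denominator as a sum of a-products
  have hden : Pr M.p (Yeq lo k.1 yv) = ∑ y ∈ Finset.univ.filter C', ∏ kk : Fin K, M.a kk y :=
    Pr_y M C'
  -- numerator as a sum of a-products
  have hnum0 : Pr M.p (fun y r => Yeq (k.1 + 1) (k.1 + 1) yv y r ∧ Yeq lo k.1 yv y r)
      = Pr M.p (fun y _ => N' y) := by
    refine Pr_congr _ _ _ fun y r => ?_
    constructor
    · rintro ⟨hA, hC⟩
      exact ⟨hA k (le_refl _) (le_refl _), hC⟩
    · rintro ⟨ha, hc⟩
      constructor
      · intro j h1 h2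
        have : j = k := Fin.ext (by omega)
        subst this
        exact ha
      · exact hc
  have hnum : Pr M.p (fun y r => Yeq (k.1 + 1) (k.1 + 1) yv y r ∧ Yeq lo k.1 yv y r)
      = ∑ y ∈ Finset.univ.filter N', ∏ kk : Fin K, M.a kk y := by
    rw [hnum0]; exact Pr_y M N'
  -- marginalize the numerator at level k+1
  have hmargN : ∑ y ∈ Finset.univ.filter N', ∏ kk : Fin K, M.a kk y
      = ∑ y ∈ Finset.univ.filter
            (fun y : Fin K → Bool => N' y ∧ ∀ j : Fin K, k.1 + 1 ≤ j.1 → y j = false),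
          ∏ kk ∈ Finset.univ.filter (fun kk : Fin K => kk.1 < k.1 + 1), M.a kk y := by
    refine marg M (k.1 + 1) (by omega) N' ?_
    rintro y y' hagree ⟨ha, hc⟩
    refine ⟨by rw [← hagree k (by omega)]; exact ha, fun j h1 h2 => ?_⟩
    rw [← hagree j (by omega)]
    exact hc j h1 h2
  -- marginalize the denominator at level k
  have hmargD : ∑ y ∈ Finset.univ.filter C', ∏ kk : Fin K, M.a kk y
      = ∑ y ∈ Finset.univ.filter
            (fun y : Fin K → Bool => C' y ∧ ∀ j : Fin K, k.1 ≤ j.1 → y j = false),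
          ∏ kk ∈ Finset.univ.filter (fun kk : Fin K => kk.1 < k.1), M.a kk y := by
    refine marg M k.1 (by omega) C' ?_
    intro y y' hagree hc j h1 h2
    rw [← hagree j (by omega)]
    exact hc j h1 h2
  -- split off the k-th factor in the numerator sum
  have hins : (Finset.univ.filter (fun kk : Fin K => kk.1 < k.1 + 1))
      = insert k (Finset.univ.filter (fun kk : Fin K => kk.1 < k.1)) := by
    ext kk
    simp only [mem_filter, mem_univ, true_and, mem_insert]
    constructor
    · intro h
      by_cases hk : kk = k
      · left; exact hk
      · right
        have : kk.1 ≠ k.1 := fun h' => hk (Fin.ext h')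
        omega
    · rintro (h | h)
      · subst h; omega
      · omega
  have hk_not : k ∉ Finset.univ.filter (fun kk : Fin K => kk.1 < k.1) := by simp
  have hnum2 : ∑ y ∈ Finset.univ.filter
        (fun y : Fin K → Bool => N' y ∧ ∀ j : Fin K, k.1 + 1 ≤ j.1 → y j = false),
      ∏ kk ∈ Finset.univ.filter (fun kk : Fin K => kk.1 < k.1 + 1), M.a kk y
      = M.a k yhat * ∑ y ∈ Finset.univ.filter
          (fun y : Fin K → Bool => N' y ∧ ∀ j : Fin K, k.1 + 1 ≤ j.1 → y j = false),
        ∏ kk ∈ Finset.univ.filter (fun kk : Fin K => kk.1 < k.1), M.a kk y := by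
    rw [Finset.mul_sum]
    refine Finset.sum_congr rfl fun y hy => ?_
    simp only [mem_filter, mem_univ, true_and] at hy
    obtain ⟨⟨ha, hc⟩, _⟩ := hy
    rw [hins, Finset.prod_insert hk_not]
    congr 1
    refine M.a_local k y yhat fun j h1 h2 => ?_
    by_cases hjk : j = k
    · subst hjk; exact ha
    · have hjlt : j.1 < k.1 := by
        have : j.1 ≠ k.1 := fun h' => hjk (Fin.ext h')
        omega
      exact hc j (hlo j.1 h1) (by omega)
  -- bijection between the two residual index sets
  have hbij : ∑ y ∈ Finset.univ.filter
        (fun y : Fin K → Bool => N' y ∧ ∀ j : Fin K, k.1 + 1 ≤ j.1 → y j = false),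
      ∏ kk ∈ Finset.univ.filter (fun kk : Fin K => kk.1 < k.1), M.a kk y
      = ∑ y ∈ Finset.univ.filter
          (fun y : Fin K → Bool => C' y ∧ ∀ j : Fin K, k.1 ≤ j.1 → y j = false),
        ∏ kk ∈ Finset.univ.filter (fun kk : Fin K => kk.1 < k.1), M.a kk y := by
    refine Finset.sum_nbij' (fun y => Function.update y k false)
      (fun y => Function.update y k (yv (k.1 + 1))) ?_ ?_ ?_ ?_ ?_
    · intro y hy
      simp only [mem_filter, mem_univ, true_and] at hy ⊢
      obtain ⟨⟨ha, hc⟩, ht⟩ := hy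
      constructor
      · intro j h1 h2
        have hjk : j ≠ k := by
          intro he; subst he; omega
        rw [Function.update_of_ne hjk]
        exact hc j h1 h2
      · intro j hj
        by_cases hjk : j = k
        · subst hjk; rw [Function.update_self]
        · rw [Function.update_of_ne hjk]
          refine ht j ?_
          have : j.1 ≠ k.1 := fun h' => hjk (Fin.ext h')
          omega
    · intro y hy
      simp only [mem_filter, mem_univ, true_and] at hy ⊢
      obtain ⟨hc, ht⟩ := hy
      refine ⟨⟨Function.update_self _ _ _, fun j h1 h2 => ?_⟩, fun j hj => ?_⟩
      · have hjk : j ≠ k := by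
          intro he; subst he; omega
        rw [Function.update_of_ne hjk]
        exact hc j h1 h2
      · have hjk : j ≠ k := by
          intro he; subst he; omega
        rw [Function.update_of_ne hjk]
        exact ht j (by omega)
    · intro y hy
      simp only [mem_filter, mem_univ, true_and] at hy
      obtain ⟨⟨ha, _⟩, _⟩ := hy
      show Function.update (Function.update y k false) k (yv (k.1 + 1)) = y
      rw [Function.update_idem, ← ha, Function.update_eq_self]
    · intro y hy
      simp only [mem_filter, mem_univ, true_and] at hy
      obtain ⟨_, ht⟩ := hy
      show Function.update (Function.update y k (yv (k.1 + 1))) k false = y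
      rw [Function.update_idem, ← ht k (le_refl _), Function.update_eq_self]
    · intro y hy
      refine Finset.prod_congr rfl fun kk hkk => ?_
      simp only [mem_filter, mem_univ, true_and] at hkk
      refine M.a_local kk y _ fun j h1 h2 => ?_
      have hjk : j ≠ k := by
        intro he; subst he; omega
      show y j = Function.update y k false j
      rw [Function.update_of_ne hjk]
  -- positivity of the denominator
  have hpos : 0 < Pr M.p (Yeq lo k.1 yv) := by
    rw [hden]
    refine Finset.sum_pos (fun y _ => Finset.prod_pos fun kk _ => M.a_pos kk y) ?_
    refine ⟨yhat, ?_⟩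
    simp only [mem_filter, mem_univ, true_and]
    intro j _ _
    rfl
  -- put everything together
  unfold cPr
  rw [hnum, hmargN, hnum2, hbij, ← hmargD, ← hden]
  exact mul_div_cancel_right₀ _ (ne_of_gt hpos)

/-- `m`th-order Markov property of the outcome marginal.  Under the
`m`th-order Markov model, the marginal law of the outcomes factorizes through the local
factors: for every `y ∈ {0,1}^K`,
`P(Y₁ = y₁, …, Y_K = y_K) = Σ_r p(y, r) = ∏ₖ aₖ(yₖ | ȳᵐₖ)`;
consequently, for every `k`,
`f(Yₖ = yₖ | Y₁ = y₁, …, Y_{k−1} = y_{k−1})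
  = f(Yₖ = yₖ | Y_{max(1,k−m)} = y_{max(1,k−m)}, …, Y_{k−1} = y_{k−1}) = aₖ(yₖ | ȳᵐₖ)`.
The 1-based paper index of `k : Fin K` is `k.1 + 1`. -/
theorem statement8 (K m : ℕ) (hm : 1 ≤ m) (hKm : 2 * m + 1 < K)
    (M : Markov K m) (yv : ℕ → Bool) :
    (Pr M.p (fun y _ => ∀ j : Fin K, y j = yv (j.1 + 1))
        = ∑ r : Fin K → Bool, M.p (fun j => yv (j.1 + 1)) r)
      ∧
    (Pr M.p (fun y _ => ∀ j : Fin K, y j = yv (j.1 + 1))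
        = ∏ k : Fin K, M.a k (fun j => yv (j.1 + 1)))
      ∧
    (∀ k : Fin K,
      cPr M.p (Yeq (k.1 + 1) (k.1 + 1) yv) (Yeq 1 k.1 yv)
        = cPr M.p (Yeq (k.1 + 1) (k.1 + 1) yv) (Yeq (k.1 + 1 - m) k.1 yv))
      ∧
    (∀ k : Fin K,
      cPr M.p (Yeq (k.1 + 1) (k.1 + 1) yv) (Yeq (k.1 + 1 - m) k.1 yv)
        = M.a k (fun j => yv (j.1 + 1))) := by
    classical
  set yhat : Fin K → Bool := fun j => yv (j.1 + 1) with hyhat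
  have h1 : Pr M.p (fun y _ => ∀ j : Fin K, y j = yv (j.1 + 1))
      = ∑ y ∈ Finset.univ.filter (fun y : Fin K → Bool => ∀ j : Fin K, y j = yv (j.1 + 1)),
          ∏ kk : Fin K, M.a kk y := Pr_y M _
  have hfil : Finset.univ.filter (fun y : Fin K → Bool => ∀ j : Fin K, y j = yv (j.1 + 1))
      = {yhat} := by
    ext y
    simp only [Finset.mem_filter, Finset.mem_univ, true_and, Finset.mem_singleton]
    constructor
    · intro h; funext j; exact h j
    · intro h j; rw [h]
  have hpart1 : Pr M.p (fun y _ => ∀ j : Fin K, y j = yv (j.1 + 1))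
      = ∑ r : Fin K → Bool, M.p yhat r := by
    rw [h1, hfil, Finset.sum_singleton, ← sum_r M yhat]
  refine ⟨hpart1, ?_, ?_, ?_⟩
  · rw [h1, hfil, Finset.sum_singleton]
  · intro k
    rw [cond_eq M yv k 1 (fun jn _ => by omega),
      cond_eq M yv k (k.1 + 1 - m) (fun jn h => h)]
  · intro k
    exact cond_eq M yv k (k.1 + 1 - m) (fun jn h => h)

end MRM
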